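/- For n ≥ 1, k ≥ 1, and any π ∈ CPERMS(n,k), the listing Rec(π,k) contains every element of CPERMS(n,k) exactly once (it has k^n·n! entries, all distinct), and its first and last permutations differ by a flip of length n: applying flip_n to the last permutation of Rec(π,k) yields its first permutation. Hence Rec(π,k) is a cyclic flip Gray code for CPERMS(n,k). -/

import Mathlib

/-- Increment the colour of every symbol of a coloured pre-permutation by `s`, modulo `k`. -/
def colShift (k s : ℕ) (p : List (ℕ × ℕ)) : List (ℕ × ℕ) :=
  p.map (fun x => (x.1, (x.2 + s) % k))

/-- The colour-incrementing prefix-reversal of length `j` (a "flip"):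
reverse the first `j` symbols and increment their colours by 1 modulo `k`. -/
def cflip (k j : ℕ) (p : List (ℕ × ℕ)) : List (ℕ × ℕ) :=
  colShift k 1 (p.take j).reverse ++ p.drop j

/-- `p` is a `k`-coloured permutation of order `n`: its values are a permutation
of `{1,…,n}` and all its colours lie in `{0,…,k-1}`. -/
def IsCPerm (n k : ℕ) (p : List (ℕ × ℕ)) : Prop :=
  (p.map Prod.fst).Perm ((List.range n).map (· + 1)) ∧ ∀ x ∈ p, x.2 < k

/-- `p` is a pre-perm: distinct values from `{1,…,n}`, colours in `{0,…,k-1}`. -/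
def IsPrePerm (n k : ℕ) (p : List (ℕ × ℕ)) : Prop :=
  (p.map Prod.fst).Nodup ∧ ∀ x ∈ p, (1 ≤ x.1 ∧ x.1 ≤ n) ∧ x.2 < k

/-- The circular string `ρ(p) = p^{+(k-1)} · p^{+(k-2)} ⋯ p^{+0}`. -/
def rho (k : ℕ) (p : List (ℕ × ℕ)) : List (ℕ × ℕ) :=
  ((List.range k).reverse).flatMap (fun s => colShift k s p)

/-- `ρ(p)_i`: the length `j-1` contiguous subword of the circular string `ρ(p)`
ending with `r_{i-1}` (1-based indices modulo `m = k·j`, where `j = p.length`). -/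
def rhoSub (k : ℕ) (p : List (ℕ × ℕ)) (i : ℕ) : List (ℕ × ℕ) :=
  (List.range (p.length - 1)).map
    (fun t => (rho k p).getD ((i + t + k * p.length - p.length) % (k * p.length)) (0, 0))

/-- Fuel-indexed version of the recursive listing `Rec(p,k)`; `fuel = p.length`. -/
def RecAux (k : ℕ) : ℕ → List (ℕ × ℕ) → List (List (ℕ × ℕ))
  | 0, p => (List.range k).map (fun s => colShift k s p)
  | fuel + 1, p =>
    if p.length ≤ 1 then (List.range k).map (fun s => colShift k s p)
    else ((List.range (k * p.length)).reverse).flatMap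
      (fun i => (RecAux k fuel (rhoSub k p (i + 1))).map (fun q => q ++ [(rho k p).getD i (0, 0)]))

/-- The recursive listing `Rec(p,k)`:
`Rec(p₁,k) = p₁, p₁^{+1}, …, p₁^{+(k-1)}` when `p` has length 1, and
`Rec(p,k) = Rec(ρ(p)_m,k)·r_m, Rec(ρ(p)_{m-1},k)·r_{m-1}, …, Rec(ρ(p)_1,k)·r_1` otherwise. -/
def RecList (k : ℕ) (p : List (ℕ × ℕ)) : List (List (ℕ × ℕ)) :=
  RecAux k p.length p

/-- The identity coloured permutation `1⁰2⁰⋯n⁰`. -/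
def idPerm (n : ℕ) : List (ℕ × ℕ) := (List.range n).map (fun i => (i + 1, 0))

namespace GrayAux
open List

lemma mod_cancel {k a b c : ℕ} (ha : a < k) (hb : b < k) (h : (c+a)%k = (c+b)%k) : a = b := by
  have h2 : a % k = b % k := Nat.ModEq.add_left_cancel' c h
  rwa [Nat.mod_eq_of_lt ha, Nat.mod_eq_of_lt hb] at h2

lemma exists_shift {k : ℕ} {c c' : ℕ} (hc : c < k) (hc' : c' < k) :
    ∃ s < k, (c + s) % k = c' := by
  refine ⟨if c ≤ c' then c' - c else c' + k - c, ?_, ?_⟩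
  · split <;> omega
  · split
    · rw [show c + (c' - c) = c' by omega, Nat.mod_eq_of_lt hc']
    · rw [show c + (c' + k - c) = c' + k by omega, Nat.add_mod_right, Nat.mod_eq_of_lt hc']

lemma length_flatMap_range {α : Type*} (g : ℕ → List α) {j : ℕ} (k : ℕ)
    (hg : ∀ s < k, (g s).length = j) : ((List.range k).flatMap g).length = k * j := by
  induction k with
  | zero => simp
  | succ k ih =>
    rw [List.range_succ, List.flatMap_append, List.length_append,
      ih (fun s hs => hg s (by omega))]
    simp [hg k (by omega)]; ring

lemma getD_flatMap_range {α : Type*} (g : ℕ → List α) (d : α) {j k : ℕ}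
    (hg : ∀ s < k, (g s).length = j) {a : ℕ} (ha : a < k * j) :
    ((List.range k).flatMap g).getD a d = (g (a/j)).getD (a%j) d := by
  induction k with
  | zero => omega
  | succ k ih =>
    rw [Nat.succ_mul] at ha
    have hj : 0 < j := by
      rcases Nat.eq_zero_or_pos j with h | h
      · subst h; omega
      · exact h
    rw [List.range_succ, List.flatMap_append]
    rcases Nat.lt_or_ge a (k * j) with h | h
    · rw [List.getD_append _ _ _ _ (by rw [length_flatMap_range g k (fun s hs => hg s (by omega))]; exact h)]
      exact ih (fun s hs => hg s (by omega)) h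
    · have hr : a - k * j < j := by omega
      have ha2 : a = j * k + (a - k * j) := by rw [Nat.mul_comm]; omega
      rw [List.getD_append_right _ _ _ _ (by rw [length_flatMap_range g k (fun s hs => hg s (by omega))]; exact h),
        length_flatMap_range g k (fun s hs => hg s (by omega))]
      have hdiv : a / j = k := by
        rw [ha2, Nat.mul_add_div hj, Nat.div_eq_of_lt hr, Nat.add_zero]
      have hmod : a % j = a - k * j := by
        conv_lhs => rw [ha2]
        rw [Nat.mul_add_mod, Nat.mod_eq_of_lt hr]
      simp [hdiv, hmod]

lemma colShift_length (k s : ℕ) (p : List (ℕ × ℕ)) : (colShift k s p).length = p.length := by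
  simp [colShift]

lemma colShift_getD (k s : ℕ) (p : List (ℕ × ℕ)) {i : ℕ} (h : i < p.length) :
    (colShift k s p).getD i (0,0) = ((p.getD i (0,0)).1, ((p.getD i (0,0)).2 + s) % k) := by
  rw [List.getD_eq_getElem _ _ (by simpa [colShift_length]), List.getD_eq_getElem _ _ h]
  simp [colShift]

lemma rho_length (k : ℕ) (p : List (ℕ × ℕ)) : (rho k p).length = k * p.length := by
  unfold rho
  rw [List.range_eq_range', List.reverse_range', List.flatMap_map]
  exact length_flatMap_range _ k (fun s _ => colShift_length ..)

lemma rho_getD (k : ℕ) (p : List (ℕ × ℕ)) {a : ℕ} (ha : a < k * p.length) :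
    (rho k p).getD a (0,0) =
      ((p.getD (a % p.length) (0,0)).1,
        ((p.getD (a % p.length) (0,0)).2 + (k - 1 - a / p.length)) % k) := by
  have hj : 0 < p.length := by
    rcases Nat.eq_zero_or_pos p.length with h | h
    · rw [h] at ha; omega
    · exact h
  unfold rho
  rw [List.range_eq_range', List.reverse_range', List.flatMap_map]
  rw [getD_flatMap_range _ _ (fun s _ => colShift_length ..) ha]
  show (colShift k (0 + k - 1 - a / p.length) p).getD _ _ = _
  rw [colShift_getD _ _ _ (Nat.mod_lt _ hj)]
  norm_num

lemma map_getD_range_take {α : Type*} (l : List α) (d : α) {nn : ℕ} (h : nn ≤ l.length) :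
    (List.range nn).map (fun t => l.getD t d) = l.take nn := by
  apply List.ext_getElem (by simp; omega)
  intro i h1 h2
  simp only [List.getElem_map, List.getElem_range, List.getElem_take]
  rw [List.getD_eq_getElem _ _ (by simp at h1; omega)]

lemma map_getD_range_drop {α : Type*} (l : List α) (d : α) {c : ℕ} (h : c ≤ l.length) :
    (List.range (l.length - c)).map (fun t => l.getD (c+t) d) = l.drop c := by
  apply List.ext_getElem (by simp)
  intro i h1 h2
  simp only [List.getElem_map, List.getElem_range, List.getElem_drop]
  rw [List.getD_eq_getElem _ _ (by simp at h1; omega)]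

lemma map_getD_mod_rotate {α : Type*} (l : List α) (d : α) (r : ℕ) {n : ℕ}
    (hl : l.length = n) (hn : 0 < n) :
    (List.range n).map (fun t => l.getD ((r+t)%n) d) = l.rotate (r%n) := by
  apply List.ext_getElem (by simp [hl])
  intro i h1 h2
  simp only [List.getElem_map, List.getElem_range]
  rw [List.getElem_rotate, List.getD_eq_getElem _ _ (by rw [hl]; exact Nat.mod_lt _ hn)]
  congr 1
  rw [hl, Nat.add_mod_mod, Nat.add_comm]

lemma getD_map_fst (p : List (ℕ × ℕ)) {a : ℕ} (h : a < p.length) :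
    (p.map Prod.fst).getD a 0 = (p.getD a (0,0)).1 := by
  rw [List.getD_eq_getElem _ _ (by simpa), List.getD_eq_getElem _ _ h]
  simp

theorem main (k : ℕ) (hk : 1 ≤ k) (j : ℕ) (hj : 1 ≤ j) : ∀ p : List (ℕ × ℕ), p.length = j →
    (p.map Prod.fst).Nodup → (∀ x ∈ p, x.2 < k) →
    (RecAux k j p).length = k ^ j * j.factorial ∧
    (RecAux k j p).Nodup ∧
    (∀ q, q ∈ RecAux k j p ↔ ((q.map Prod.fst).Perm (p.map Prod.fst) ∧ ∀ x ∈ q, x.2 < k)) ∧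
    (RecAux k j p).head? = some p ∧
    (RecAux k j p).getLast? = some ((colShift k (k-1) p).reverse) := by
  induction j, hj using Nat.le_induction with
  | base =>
    intro p hlen _ hcol
    obtain ⟨x, rfl⟩ := List.length_eq_one_iff.mp hlen
    have hx : x.2 < k := hcol x (by simp)
    have E : RecAux k 1 [x] = (List.range k).map (fun s => [(x.1, (x.2+s)%k)]) := by
      simp [RecAux, colShift]
    obtain ⟨k', rfl⟩ : ∃ k', k = k' + 1 := ⟨k - 1, by omega⟩
    refine ⟨?_, ?_, ?_, ?_, ?_⟩
    · simp [E, Nat.factorial]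
    · rw [E]
      refine List.Nodup.map_on ?_ List.nodup_range
      intro s hs s' hs' hss
      simp only [List.mem_range] at hs hs'
      have : (x.2 + s) % (k'+1) = (x.2 + s') % (k'+1) := by
        simpa using congrArg (fun l => (l.headI : ℕ × ℕ).2) hss
      exact mod_cancel hs hs' this
    · intro q
      rw [E]
      simp only [List.mem_map, List.mem_range]
      constructor
      · rintro ⟨s, hs, rfl⟩
        exact ⟨by simp, by intro y hy; simp only [List.mem_singleton] at hy; subst hy; exact Nat.mod_lt _ (by omega)⟩
      · rintro ⟨hperm, hcolq⟩
        have : q.map Prod.fst = [x.1] := List.perm_singleton.mp (by simpa using hperm)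
        obtain ⟨y, rfl⟩ : ∃ y, q = [y] := by
          cases q with
          | nil => simp at this
          | cons a l =>
            cases l with
            | nil => exact ⟨a, rfl⟩
            | cons b l' => simp at this
        have hy1 : y.1 = x.1 := by simpa using this
        have hy2 : y.2 < k' + 1 := hcolq y (by simp)
        obtain ⟨s, hs, hmod⟩ := exists_shift hx hy2
        exact ⟨s, hs, by rw [hmod, ← hy1]⟩
    · rw [E]
      rw [List.range_succ_eq_map]
      simp [Nat.mod_eq_of_lt hx]
    · rw [E, List.range_succ, List.map_append]
      simp [colShift, Nat.add_sub_cancel]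
  | succ j hj1 ih =>
    intro p hlen hnd hcol
    have hlen2 : 2 ≤ p.length := by omega
    have hlpos : 0 < p.length := by omega
    have hmpos : 0 < k * p.length := Nat.mul_pos (by omega) hlpos
    have hlm : p.length ≤ k * p.length := Nat.le_mul_of_pos_left _ (by omega)
    have hdvd : p.length ∣ k * p.length := dvd_mul_left _ _
    have E : RecAux k (j+1) p = ((List.range (k * p.length)).reverse).flatMap
        (fun i => (RecAux k j (rhoSub k p (i + 1))).map
          (fun q => q ++ [(rho k p).getD i (0, 0)])) := by
      rw [RecAux, if_neg (by omega)]
    -- the colour of every symbol of rho is < k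
    have hrcol : ∀ a, a < k * p.length → ((rho k p).getD a (0,0)).2 < k := by
      intro a ha
      rw [rho_getD k p ha]
      exact Nat.mod_lt _ (by omega)
    -- fst of rho entries
    have hrfst : ∀ a, a < k * p.length →
        ((rho k p).getD a (0,0)).1 = (p.map Prod.fst).getD (a % p.length) 0 := by
      intro a ha
      rw [rho_getD k p ha, getD_map_fst p (Nat.mod_lt _ hlpos)]
    -- fsts of rhoSub
    have hsubfst : ∀ i, i < k * p.length → (rhoSub k p (i+1)).map Prod.fst =
        (List.range j).map (fun t => (p.map Prod.fst).getD ((i+1+t) % p.length) 0) := by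
      intro i him
      unfold rhoSub
      rw [List.map_map, show p.length - 1 = j by omega]
      apply List.map_congr_left
      intro t ht
      simp only [Function.comp_apply]
      rw [hrfst _ (Nat.mod_lt _ hmpos)]
      congr 1
      rw [Nat.mod_mod_of_dvd _ hdvd]
      have h1 : i + 1 + t + k * p.length - p.length
          = i + 1 + t + (k-1) * p.length := by
        have : k * p.length = (k-1) * p.length + p.length := by
          rw [Nat.sub_one_mul]; omega
        omega
      rw [h1, Nat.add_mul_mod_self_right]
    -- the window ++ the symbol is a rotation of the values of p
    have hrot : ∀ i, i < k * p.length →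
        (rhoSub k p (i+1)).map Prod.fst ++ [((rho k p).getD i (0,0)).1]
          = (p.map Prod.fst).rotate ((i+1) % p.length) := by
      intro i him
      rw [hsubfst i him, hrfst i him]
      have h2 : (p.map Prod.fst).getD (i % p.length) 0
          = (p.map Prod.fst).getD ((i+1+j) % p.length) 0 := by
        congr 1
        rw [show i+1+j = i + p.length by omega, Nat.add_mod_right]
      have h4 : [(p.map Prod.fst).getD ((i+1+j) % p.length) 0]
          = List.map (fun t => (p.map Prod.fst).getD ((i+1+t) % p.length) 0) [j] := by simp
      rw [h2, h4, ← List.map_append]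
      have h3 : List.range j ++ [j] = List.range (j+1) := List.range_succ.symm
      rw [h3, hlen]
      exact map_getD_mod_rotate _ _ _ (by simp [hlen]) (by omega)
    -- validity of the rhoSub subwords
    have hsublen : ∀ i, (rhoSub k p (i+1)).length = j := by
      intro i; simp [rhoSub, hlen]
    have hsubnd : ∀ i, i < k * p.length → ((rhoSub k p (i+1)).map Prod.fst).Nodup := by
      intro i him
      have h1 : ((p.map Prod.fst).rotate ((i+1) % p.length)).Nodup :=
        List.nodup_rotate.mpr hnd
      rw [← hrot i him] at h1
      exact (List.nodup_append.mp h1).1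
    have hsubcol : ∀ i, i < k * p.length → ∀ x ∈ rhoSub k p (i+1), x.2 < k := by
      intro i him x hx
      unfold rhoSub at hx
      simp only [List.mem_map, List.mem_range] at hx
      obtain ⟨t, ht, rfl⟩ := hx
      exact hrcol _ (Nat.mod_lt _ hmpos)
    -- injectivity of the symbols of rho
    have hrinj : ∀ i, i < k * p.length → ∀ i', i' < k * p.length →
        (rho k p).getD i (0,0) = (rho k p).getD i' (0,0) → i = i' := by
      intro i hi i' hi' heq
      rw [rho_getD k p hi, rho_getD k p hi', Prod.mk.injEq] at heq
      have hmod : i % p.length = i' % p.length := by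
        have e1 : (p.map Prod.fst).getD (i % p.length) 0
            = (p.map Prod.fst).getD (i' % p.length) 0 := by
          rw [getD_map_fst p (Nat.mod_lt _ hlpos), getD_map_fst p (Nat.mod_lt _ hlpos)]
          exact heq.1
        rw [List.getD_eq_getElem _ _ (by simpa using Nat.mod_lt i hlpos),
          List.getD_eq_getElem _ _ (by simpa using Nat.mod_lt i' hlpos)] at e1
        exact (List.Nodup.getElem_inj_iff hnd).mp e1
      have hdivlt : i / p.length < k := (Nat.div_lt_iff_lt_mul hlpos).mpr hi
      have hdivlt' : i' / p.length < k := (Nat.div_lt_iff_lt_mul hlpos).mpr hi'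
      have hsnd := heq.2
      rw [hmod] at hsnd
      have a1 := Nat.div_add_mod i p.length
      have a2 := Nat.div_add_mod i' p.length
      obtain ⟨d1, hd1⟩ : ∃ d, i / p.length = d := ⟨_, rfl⟩
      obtain ⟨d2, hd2⟩ : ∃ d, i' / p.length = d := ⟨_, rfl⟩
      rw [hd1] at hsnd hdivlt a1
      rw [hd2] at hsnd hdivlt' a2
      have hdiveq : k - 1 - d1 = k - 1 - d2 := mod_cancel (by omega) (by omega) hsnd
      have hd12 : d1 = d2 := by omega
      rw [hd12] at a1
      rw [hmod] at a1
      omega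
    -- the inductive hypothesis applied to each subword
    have IH : ∀ i, i < k * p.length →
        (RecAux k j (rhoSub k p (i+1))).length = k ^ j * j.factorial ∧
        (RecAux k j (rhoSub k p (i+1))).Nodup ∧
        (∀ q, q ∈ RecAux k j (rhoSub k p (i+1)) ↔
          ((q.map Prod.fst).Perm ((rhoSub k p (i+1)).map Prod.fst) ∧ ∀ x ∈ q, x.2 < k)) ∧
        (RecAux k j (rhoSub k p (i+1))).head? = some (rhoSub k p (i+1)) ∧
        (RecAux k j (rhoSub k p (i+1))).getLast?
          = some ((colShift k (k-1) (rhoSub k p (i+1))).reverse) := by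
      intro i him
      exact ih _ (hsublen i) (hsubnd i him) (hsubcol i him)
    refine ⟨?_, ?_, ?_, ?_, ?_⟩
    · -- length
      rw [E, List.length_flatMap]
      rw [List.sum_eq_card_nsmul _ (k^j * j.factorial) ?_, smul_eq_mul]
      · simp only [List.length_map, List.length_reverse, List.length_range, hlen]
        rw [pow_succ, Nat.factorial_succ]
        ring
      · intro x hx
        simp only [List.mem_map, List.mem_reverse, List.mem_range] at hx
        obtain ⟨i, hi2, rfl⟩ := hx
        simp only [Function.comp_apply, List.length_map]
        exact (IH i hi2).1
    · -- nodup
      rw [E, List.nodup_flatMap]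
      constructor
      · intro i hi2
        rw [List.mem_reverse, List.mem_range] at hi2
        exact ((IH i hi2).2.1).map (List.append_left_injective _)
      · refine List.Pairwise.imp_of_mem ?_ (List.nodup_reverse.mpr List.nodup_range)
        intro a b ha hb hne
        rw [List.mem_reverse, List.mem_range] at ha hb
        intro q hqa hqb
        simp only [List.mem_map] at hqa hqb
        obtain ⟨q1, _, hea⟩ := hqa
        obtain ⟨q2, _, heb⟩ := hqb
        have he : q2 ++ [(rho k p).getD b (0,0)] = q1 ++ [(rho k p).getD a (0,0)] := by
          rw [hea, heb]
        have h5 : (rho k p).getD b (0,0) = (rho k p).getD a (0,0) := by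
          have h7 := congrArg List.getLast? he
          rwa [List.getLast?_concat, List.getLast?_concat, Option.some_inj] at h7
        exact hne (hrinj a ha b hb h5.symm)
    · -- membership
      intro q
      rw [E]
      simp only [List.mem_flatMap, List.mem_reverse, List.mem_range, List.mem_map]
      constructor
      · rintro ⟨i, him, q1, hq1, rfl⟩
        obtain ⟨hperm1, hcol1⟩ := ((IH i him).2.2.1 q1).mp hq1
        constructor
        · rw [List.map_append]
          refine ((hperm1.append_right _).trans ?_)
          rw [show (List.map Prod.fst [(rho k p).getD i (0,0)])
              = [((rho k p).getD i (0,0)).1] by simp]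
          rw [hrot i him]
          exact List.rotate_perm _ _
        · intro x hx
          rcases List.mem_append.mp hx with h | h
          · exact hcol1 x h
          · rw [List.mem_singleton] at h
            rw [h]
            exact hrcol i him
      · rintro ⟨hperm, hcolq⟩
        have hqlen : q.length = p.length := by
          have := hperm.length_eq
          simpa using this
        have hqne : q ≠ [] := by
          intro h
          rw [h] at hqlen
          simp at hqlen
          omega
        set x := q.getLast hqne with hxdef
        have hqsplit : q.dropLast ++ [x] = q := List.dropLast_append_getLast hqne
        have hx2 : x.2 < k := hcolq x (List.getLast_mem hqne)
        have hx1w : x.1 ∈ p.map Prod.fst :=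
          hperm.subset (List.mem_map_of_mem (List.getLast_mem hqne))
        set t0 := (p.map Prod.fst).idxOf x.1 with ht0def
        have ht0 : t0 < p.length := by
          have := List.idxOf_lt_length_iff.mpr hx1w
          simpa using this
        have hw_t0 : (p.getD t0 (0,0)).1 = x.1 := by
          rw [← getD_map_fst p ht0, List.getD_eq_getElem _ _ (by simpa using ht0)]
          exact List.getElem_idxOf _
        have hpt0_mem : p.getD t0 (0,0) ∈ p := by
          rw [List.getD_eq_getElem _ _ ht0]
          exact List.getElem_mem _
        have hc : (p.getD t0 (0,0)).2 < k := hcol _ hpt0_mem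
        obtain ⟨s, hs, hmods⟩ := exists_shift hc hx2
        refine ⟨p.length * (k-1-s) + t0, ?_, ?_⟩
        · -- bound
          have h6 : k*p.length = (k-1)*p.length + p.length := by
            rw [Nat.sub_one_mul]; omega
          have h8 : p.length * (k-1-s) ≤ p.length * (k-1) :=
            Nat.mul_le_mul_left _ (by omega)
          have h9 : p.length * (k-1) = (k-1) * p.length := Nat.mul_comm _ _
          omega
        · have him : p.length * (k-1-s) + t0 < k * p.length := by
            have h6 : k*p.length = (k-1)*p.length + p.length := by
              rw [Nat.sub_one_mul]; omega
            have h8 : p.length * (k-1-s) ≤ p.length * (k-1) :=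
              Nat.mul_le_mul_left _ (by omega)
            have h9 : p.length * (k-1) = (k-1) * p.length := Nat.mul_comm _ _
            omega
          have hidiv : (p.length * (k-1-s) + t0) / p.length = k-1-s := by
            rw [Nat.mul_add_div hlpos, Nat.div_eq_of_lt ht0, Nat.add_zero]
          have himod : (p.length * (k-1-s) + t0) % p.length = t0 := by
            rw [Nat.mul_add_mod, Nat.mod_eq_of_lt ht0]
          have hri : (rho k p).getD (p.length * (k-1-s) + t0) (0,0) = x := by
            rw [rho_getD k p him, hidiv, himod]
            have e5 : k - 1 - (k-1-s) = s := by omega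
            rw [e5, hmods, hw_t0]
          refine ⟨q.dropLast, ?_, by rw [hri]; exact hqsplit⟩
          refine ((IH _ him).2.2.1 _).mpr ⟨?_, ?_⟩
          · have h1 : q.dropLast.map Prod.fst ++ [x.1]
                ~ (rhoSub k p (p.length * (k-1-s) + t0 + 1)).map Prod.fst ++ [x.1] := by
              have hL : q.dropLast.map Prod.fst ++ [x.1] = q.map Prod.fst := by
                rw [← hqsplit]
                simp
              have hR : (rhoSub k p (p.length * (k-1-s) + t0 + 1)).map Prod.fst ++ [x.1]
                  = (p.map Prod.fst).rotate ((p.length * (k-1-s) + t0 + 1) % p.length) := by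
                rw [← hrot _ him, hri]
              rw [hL, hR]
              exact hperm.trans (List.rotate_perm _ _).symm
            exact (List.perm_append_right_iff _).mp h1
          · intro y hy
            exact hcolq y ((List.dropLast_sublist q).subset hy)
    · -- head?
      rw [E]
      have h6 : k*p.length = (k-1)*p.length + p.length := by
        rw [Nat.sub_one_mul]; omega
      obtain ⟨M, hM⟩ : ∃ M, k * p.length = M + 1 := ⟨k*p.length - 1, by omega⟩
      have hrev : (List.range (k*p.length)).reverse
          = M :: (List.range M).reverse := by
        rw [hM, List.range_succ, List.reverse_append]
        simp
      rw [hrev, List.flatMap_cons, List.head?_append, List.head?_map,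
        (IH M (by omega)).2.2.2.1]
      show some _ = _
      congr 1
      -- rhoSub k p (M+1) = p.dropLast and the appended symbol is p.getLast
      have hsubm : rhoSub k p (M+1) = p.dropLast := by
        unfold rhoSub
        rw [← hM]
        have hcong : ∀ t ∈ List.range (p.length - 1),
            (rho k p).getD ((k*p.length + t + k*p.length - p.length) % (k*p.length)) (0,0)
              = p.getD t (0,0) := by
          intro t ht
          rw [List.mem_range] at ht
          have e1 : (k*p.length + t + k*p.length - p.length) % (k*p.length)
              = (k-1)*p.length + t := by
            have h7 : k*p.length + t + k*p.length - p.length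
                = k*p.length + ((k-1)*p.length + t) := by omega
            rw [h7, Nat.add_mod_left, Nat.mod_eq_of_lt (by omega)]
          rw [e1, rho_getD k p (by omega)]
          have e2 : ((k-1) * p.length + t) % p.length = t := by
            rw [Nat.mul_comm, Nat.mul_add_mod, Nat.mod_eq_of_lt (by omega)]
          have e3 : ((k-1) * p.length + t) / p.length = k - 1 := by
            rw [Nat.mul_comm, Nat.mul_add_div hlpos, Nat.div_eq_of_lt (by omega), Nat.add_zero]
          have e4 : k - 1 - (k-1) = 0 := by omega
          rw [e2, e3, e4, Nat.add_zero, Nat.mod_eq_of_lt]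
          · exact hcol _ (by rw [List.getD_eq_getElem _ _ (by omega)]; exact List.getElem_mem _)
        rw [List.map_congr_left hcong, map_getD_range_take p (0,0) (by omega),
          List.dropLast_eq_take]
      have hrm : (rho k p).getD M (0,0) = p.getLast (by intro h; rw [h] at hlen2; simp at hlen2) := by
        have e1 : M = (k-1)*p.length + (p.length - 1) := by omega
        rw [e1, rho_getD k p (by omega)]
        have e2 : ((k-1) * p.length + (p.length - 1)) % p.length = p.length - 1 := by
          rw [Nat.mul_comm, Nat.mul_add_mod, Nat.mod_eq_of_lt (by omega)]
        have e3 : ((k-1) * p.length + (p.length - 1)) / p.length = k - 1 := by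
          rw [Nat.mul_comm, Nat.mul_add_div hlpos, Nat.div_eq_of_lt (by omega), Nat.add_zero]
        have e4 : k - 1 - (k-1) = 0 := by omega
        rw [e2, e3, e4, Nat.add_zero, Nat.mod_eq_of_lt]
        · rw [List.getLast_eq_getElem, List.getD_eq_getElem _ _ (by omega)]
        · exact hcol _ (by rw [List.getD_eq_getElem _ _ (by omega)]; exact List.getElem_mem _)
      rw [hsubm, hrm]
      exact List.dropLast_append_getLast _
    · -- getLast?
      rw [E]
      have h6 : k*p.length = (k-1)*p.length + p.length := by
        rw [Nat.sub_one_mul]; omega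
      obtain ⟨M, hM⟩ : ∃ M, k * p.length = M + 1 := ⟨k*p.length - 1, by omega⟩
      have hrev : (List.range (k*p.length)).reverse
          = (List.map Nat.succ (List.range M)).reverse ++ [0] := by
        rw [hM, List.range_succ_eq_map, List.reverse_cons]
      rw [hrev, List.flatMap_append]
      rw [List.getLast?_append]
      have hB : (([0] : List ℕ).flatMap (fun i => (RecAux k j (rhoSub k p (i+1))).map
          (fun q => q ++ [(rho k p).getD i (0,0)]))).getLast?
          = some ((colShift k (k-1) (rhoSub k p 1)).reverse ++ [(rho k p).getD 0 (0,0)]) := by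
        simp only [List.flatMap_cons, List.flatMap_nil, List.append_nil]
        rw [List.getLast?_map, (IH 0 hmpos).2.2.2.2]
        rfl
      rw [hB]
      show some _ = _
      congr 1
      have hsub1 : rhoSub k p 1 = p.drop 1 := by
        unfold rhoSub
        have hcong : ∀ t ∈ List.range (p.length - 1),
            (rho k p).getD ((1 + t + k*p.length - p.length) % (k*p.length)) (0,0)
              = p.getD (1+t) (0,0) := by
          intro t ht
          rw [List.mem_range] at ht
          have e1 : (1 + t + k*p.length - p.length) % (k*p.length)
              = (k-1)*p.length + (1+t) := by
            have h7 : 1 + t + k*p.length - p.length = (k-1)*p.length + (1+t) := by omega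
            rw [h7, Nat.mod_eq_of_lt (by omega)]
          rw [e1, rho_getD k p (by omega)]
          have e2 : ((k-1) * p.length + (1+t)) % p.length = 1+t := by
            rw [Nat.mul_comm, Nat.mul_add_mod, Nat.mod_eq_of_lt (by omega)]
          have e3 : ((k-1) * p.length + (1+t)) / p.length = k - 1 := by
            rw [Nat.mul_comm, Nat.mul_add_div hlpos, Nat.div_eq_of_lt (by omega), Nat.add_zero]
          have e4 : k - 1 - (k-1) = 0 := by omega
          rw [e2, e3, e4, Nat.add_zero, Nat.mod_eq_of_lt]
          · exact hcol _ (by rw [List.getD_eq_getElem _ _ (by omega)]; exact List.getElem_mem _)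
        rw [List.map_congr_left hcong, map_getD_range_drop p (0,0) (by omega)]
      have hr0 : (rho k p).getD 0 (0,0)
          = ((p.getD 0 (0,0)).1, ((p.getD 0 (0,0)).2 + (k-1)) % k) := by
        rw [rho_getD k p hmpos, Nat.zero_mod, Nat.zero_div, Nat.sub_zero]
      obtain ⟨a, p', rfl⟩ : ∃ a p', p = a :: p' := by
        cases p with
        | nil => simp at hlen2
        | cons a p' => exact ⟨a, p', rfl⟩
      rw [hsub1, hr0]
      simp [colShift]

end GrayAux

/-- For `n,k ≥ 1` and `π ∈ CPERMS(n,k)`, the listing `Rec(π,k)`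
contains every element of `CPERMS(n,k)` exactly once (it has `kⁿ·n!` entries, all
distinct), and applying a flip of length `n` to its last permutation yields its first:
it is a cyclic flip Gray code for `CPERMS(n,k)`. -/
theorem recList_cyclic_gray_code (n k : ℕ) (hn : 1 ≤ n) (hk : 1 ≤ k)
    (π : List (ℕ × ℕ)) (hπ : IsCPerm n k π) :
    (RecList k π).length = k ^ n * n.factorial ∧
    (RecList k π).Nodup ∧
    (∀ q, IsCPerm n k q → q ∈ RecList k π) ∧
    (∀ q ∈ RecList k π, IsCPerm n k q) ∧
    ∃ first last, (RecList k π).head? = some first ∧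
      (RecList k π).getLast? = some last ∧ cflip k n last = first := by
  obtain ⟨hperm, hcol⟩ := hπ
  have hlen : π.length = n := by
    have := hperm.length_eq
    simpa using this
  have hnd : (π.map Prod.fst).Nodup := by
    refine hperm.nodup_iff.mpr ?_
    exact List.nodup_range.map (fun a b h => by omega)
  obtain ⟨hlenR, hnodup, hmem, hhead, hlast⟩ :=
    GrayAux.main k hk n hn π hlen hnd hcol
  have ER : RecList k π = RecAux k n π := by rw [RecList, hlen]
  rw [ER]
  refine ⟨hlenR, hnodup, ?_, ?_, ?_⟩
  · intro q hq
    exact (hmem q).mpr ⟨hq.1.trans hperm.symm, hq.2⟩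
  · intro q hq
    obtain ⟨h1, h2⟩ := (hmem q).mp hq
    exact ⟨h1.trans hperm, h2⟩
  · refine ⟨π, (colShift k (k-1) π).reverse, hhead, hlast, ?_⟩
    have hlenc : ((colShift k (k-1) π).reverse).length = n := by
      simp [colShift, hlen]
    rw [cflip]
    rw [show ((colShift k (k-1) π).reverse).take n = (colShift k (k-1) π).reverse by
      rw [← hlenc]; exact List.take_length]
    rw [show ((colShift k (k-1) π).reverse).drop n = [] by
      rw [← hlenc]; exact List.drop_length]
    rw [List.reverse_reverse, List.append_nil]
    unfold colShift
    rw [List.map_map]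
    have hcong : ∀ x ∈ π,
        ((fun x : ℕ × ℕ => (x.1, (x.2 + 1) % k)) ∘ fun x : ℕ × ℕ => (x.1, (x.2 + (k-1)) % k)) x
          = id x := by
      intro x hx
      have hx2 : x.2 < k := hcol x hx
      simp only [Function.comp_apply, id]
      have e : ((x.2 + (k-1)) % k + 1) % k = x.2 := by
        rw [Nat.mod_add_mod, show x.2 + (k-1) + 1 = x.2 + k by omega,
          Nat.add_mod_right, Nat.mod_eq_of_lt hx2]
      rw [e]
    rw [List.map_congr_left hcong, List.map_id]
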